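/- arXiv:1203.0946 — 2 statements merged into one kernel-verified Lean document; each statement's English description precedes it below -/
import Mathlib

section
/- Let V be a finite-dimensional real vector space, let C ⊆ V be an almost compact cone, and let p > 0 be an integer. Then Symᵖ(C) is an almost compact cone in the space Symᵖ(V) of symmetric tensors; that is, Symᵖ(C) is a convex cone that is closed, pointed (Symᵖ(C) ∩ (−Symᵖ(C)) = {0}), and has nonempty interior in Symᵖ(V). -/
open Set Module

theorem mySumExtend {M : Type*} [AddCommMonoid M] {m n : ℕ} (hmn : m ≤ n) (f : Fin m → M) :
    (∑ i : Fin n, if h : (i : ℕ) < m then f ⟨i, h⟩ else 0) = ∑ i : Fin m, f i := by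
  let G : ℕ → M := fun i => if h : i < m then f ⟨i, h⟩ else 0
  calc ∑ i : Fin n, (if h : (i : ℕ) < m then f ⟨i, h⟩ else 0)
      = ∑ i ∈ Finset.range n, (if h : i < m then f ⟨i, h⟩ else 0) :=
        Fin.sum_univ_eq_sum_range G n
    _ = ∑ i ∈ Finset.range m, (if h : i < m then f ⟨i, h⟩ else 0) :=
        (Finset.sum_subset (Finset.range_subset_range.2 hmn)
          (fun i _ hi => dif_neg (by simpa using hi))).symm
    _ = ∑ i : Fin m, (if h : (i : ℕ) < m then f ⟨i, h⟩ else 0) :=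
        (Fin.sum_univ_eq_sum_range _ m).symm
    _ = ∑ i : Fin m, f i := Finset.sum_congr rfl (fun i _ => dif_pos i.isLt)

theorem myIsCompactConvexHull {E : Type*} [NormedAddCommGroup E] [NormedSpace ℝ E]
    [FiniteDimensional ℝ E] {K : Set E} (hK : IsCompact K) :
    IsCompact (convexHull ℝ K) := by
  classical
  rcases K.eq_empty_or_nonempty with rfl | ⟨x₀, hx₀⟩
  · simp
  set n := finrank ℝ E + 2 with hn
  have key : convexHull ℝ K =
      (fun wz : (Fin n → ℝ) × (Fin n → E) => ∑ i, wz.1 i • wz.2 i) ''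
        (stdSimplex ℝ (Fin n) ×ˢ Set.univ.pi fun _ : Fin n => K) := by
    apply Set.Subset.antisymm
    · intro x hx
      rw [convexHull_eq_union] at hx
      simp only [Set.mem_iUnion] at hx
      obtain ⟨t, htK, hai, hxt⟩ := hx
      have hm : t.card ≤ n := by
        have h1 := hai.card_le_finrank_succ
        rw [Fintype.card_coe] at h1
        have h2 : finrank ℝ (vectorSpan ℝ (Set.range ((↑) : t → E))) ≤ finrank ℝ E :=
          Submodule.finrank_le _
        omega
      rw [Finset.convexHull_eq] at hxt
      obtain ⟨w, hw0, hw1, hcen⟩ := hxt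
      have ht : t.Nonempty := Finset.nonempty_of_ne_empty (by rintro rfl; simp at hw1)
      set m := t.card with hmdef
      set e : Fin m ≃ {x // x ∈ t} := t.equivFin.symm with he
      refine ⟨(fun i => if h : (i : ℕ) < m then w (e ⟨i, h⟩) else 0,
               fun i => if h : (i : ℕ) < m then (e ⟨i, h⟩ : E) else x₀), ⟨⟨?_, ?_⟩, ?_⟩, ?_⟩
      · intro i
        dsimp only
        split
        · exact hw0 _ (e _).2
        · exact le_refl 0
      · rw [mySumExtend hm (fun i => w (e i))]
        rw [Equiv.sum_comp e (fun a : {x // x ∈ t} => w ↑a), Finset.sum_coe_sort t w, hw1]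
      · intro i _
        dsimp only
        split
        · exact htK (e _).2
        · exact hx₀
      · dsimp only
        have : (∑ i : Fin n, (if h : (i : ℕ) < m then w (e ⟨i, h⟩) else 0) •
            (if h : (i : ℕ) < m then ((e ⟨i, h⟩ : {x // x ∈ t}) : E) else x₀))
            = ∑ i : Fin m, w (e i) • (e i : E) := by
          rw [← mySumExtend hm (fun i => w (e i) • (e i : E))]
          refine Finset.sum_congr rfl (fun i _ => ?_)
          by_cases h : (i : ℕ) < m
          · rw [dif_pos h, dif_pos h, dif_pos h]
          · rw [dif_neg h, dif_neg h, dif_neg h, zero_smul]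
        rw [this, Equiv.sum_comp e (fun a : {x // x ∈ t} => w a • (a : E))]
        rw [← hcen, t.centerMass_eq_of_sum_1 _ hw1]
        rw [← Finset.sum_coe_sort t (fun y => w y • id y)]
        simp
    · rintro x ⟨⟨w, z⟩, ⟨⟨hw0, hw1⟩, hz⟩, rfl⟩
      exact (convex_convexHull ℝ K).sum_mem (fun i _ => hw0 i) hw1
        (fun i _ => subset_convexHull ℝ K (hz i (Set.mem_univ i)))
  rw [key]
  exact ((isCompact_stdSimplex (𝕜 := ℝ) (ι := Fin n)).prod (isCompact_univ_pi fun _ => hK)).image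
    (continuous_finset_sum _ fun i _ =>
      ((continuous_apply i).comp continuous_fst).smul ((continuous_apply i).comp continuous_snd))

theorem myExistsPosFunctional {V : Type*} [NormedAddCommGroup V] [NormedSpace ℝ V]
    [FiniteDimensional ℝ V] {C : Set V}
    (hadd : ∀ x ∈ C, ∀ y ∈ C, x + y ∈ C)
    (hsmul : ∀ c : ℝ, 0 ≤ c → ∀ x ∈ C, c • x ∈ C)
    (hclosed : IsClosed C)
    (hpointed : C ∩ (-C) = {0}) :
    ∃ (f : V →L[ℝ] ℝ) (u : ℝ), 0 < u ∧ ∀ x ∈ C, u * ‖x‖ ≤ f x := by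
  classical
  have h0C : (0 : V) ∈ C := by
    have : (0 : V) ∈ C ∩ (-C) := by rw [hpointed]; exact rfl
    exact this.1
  have hsumC : ∀ (ι : Type) (s : Finset ι) (g : ι → V), (∀ i ∈ s, g i ∈ C) →
      ∑ i ∈ s, g i ∈ C := by
    intro ι s
    induction s using Finset.induction with
    | empty => intro g _; simpa using h0C
    | @insert a s ha ih =>
      intro g hg
      rw [Finset.sum_insert ha]
      exact hadd _ (hg _ (Finset.mem_insert_self _ _)) _
        (ih _ fun i hi => hg _ (Finset.mem_insert_of_mem hi))
  set K₀ := C ∩ Metric.sphere (0 : V) 1 with hK₀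
  have hK₀c : IsCompact K₀ :=
    (Metric.isCompact_of_isClosed_isBounded
      (hclosed.inter Metric.isClosed_sphere)
      ((Metric.isBounded_sphere).subset (Set.inter_subset_right)))
  have h0 : (0 : V) ∉ convexHull ℝ K₀ := by
    intro h0
    rw [convexHull_eq] at h0
    obtain ⟨ι, t, w, z, hw0, hw1, hz, hcm⟩ := h0
    rw [Finset.centerMass_eq_of_sum_1 _ _ hw1] at hcm
    have hex : ∃ i ∈ t, 0 < w i := by
      by_contra h
      push_neg at h
      have : ∑ i ∈ t, w i = 0 :=
        Finset.sum_eq_zero fun i hi => le_antisymm (h i hi) (hw0 i hi)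
      rw [hw1] at this; norm_num at this
    obtain ⟨i₀, hi₀t, hi₀⟩ := hex
    have hsplit : ∑ i ∈ t.erase i₀, w i • z i + w i₀ • z i₀ = 0 := by
      rw [Finset.sum_erase_add t _ hi₀t]; exact hcm
    have h1 : w i₀ • z i₀ ∈ C := hsmul _ hi₀.le _ (hz i₀ hi₀t).1
    have h2 : w i₀ • z i₀ ∈ -C := by
      rw [Set.mem_neg]
      rw [neg_eq_of_add_eq_zero_left hsplit]
      exact hsumC ι _ _ fun i hi =>
        hsmul _ (hw0 i (Finset.mem_of_mem_erase hi)) _ (hz i (Finset.mem_of_mem_erase hi)).1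
    have h3 : w i₀ • z i₀ = 0 := by
      have : w i₀ • z i₀ ∈ C ∩ (-C) := ⟨h1, h2⟩
      rwa [hpointed, Set.mem_singleton_iff] at this
    have h4 : z i₀ = 0 := by
      rcases smul_eq_zero.1 h3 with h | h
      · exact absurd h (ne_of_gt hi₀)
      · exact h
    have h5 : ‖z i₀‖ = 1 := by
      have := (hz i₀ hi₀t).2
      rwa [Metric.mem_sphere, dist_zero_right] at this
    rw [h4, norm_zero] at h5; norm_num at h5
  obtain ⟨f, u, hfu, hsep⟩ := geometric_hahn_banach_point_closed
    (convex_convexHull ℝ K₀) (myIsCompactConvexHull hK₀c).isClosed h0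
  have hu : 0 < u := by simpa using hfu
  refine ⟨f, u, hu, ?_⟩
  intro x hx
  rcases eq_or_ne x 0 with rfl | hx0
  · simp
  · have hn : 0 < ‖x‖ := norm_pos_iff.2 hx0
    have hxs : ‖x‖⁻¹ • x ∈ K₀ := by
      refine ⟨hsmul _ (by positivity) _ hx, ?_⟩
      rw [Metric.mem_sphere, dist_zero_right, norm_smul, norm_inv, norm_norm]
      field_simp
    have h6 : u < f (‖x‖⁻¹ • x) := hsep _ (subset_convexHull ℝ K₀ hxs)
    rw [map_smul, smul_eq_mul] at h6
    calc u * ‖x‖ ≤ (‖x‖⁻¹ * f x) * ‖x‖ := by nlinarith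
      _ = f x := by field_simp

/-- A convex cone `C` in a finite-dimensional real vector space is an *almost compact cone*
if it is a convex cone that is closed, pointed (`C ∩ (−C) = {0}`) and full-dimensional
(nonempty interior). -/
def IsACCone {V : Type*} [NormedAddCommGroup V] [NormedSpace ℝ V] (C : Set V) : Prop :=
  (∀ x ∈ C, ∀ y ∈ C, x + y ∈ C) ∧
  (∀ c : ℝ, 0 ≤ c → ∀ x ∈ C, c • x ∈ C) ∧
  IsClosed C ∧
  C ∩ (-C) = {0} ∧
  (interior C).Nonempty

/-- Let `S`, together with the symmetric multilinear map `q : Vᵖ → S` (the symmetrization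
of elementary tensors), realize the `p`-th symmetric power `Symᵖ(V)`: this is expressed by
the universal property `huniv`.  If `C ⊆ V` is an almost compact cone and `p > 0` then
`Symᵖ(C)`, the cone of all finite nonnegative combinations of elements `q(v₁,…,v_p)` with
`vᵢ ∈ C`, is an almost compact cone in `Symᵖ(V)`. -/
theorem sym_cone_is_almost_compact {V S : Type*}
    [NormedAddCommGroup V] [NormedSpace ℝ V] [FiniteDimensional ℝ V]
    [NormedAddCommGroup S] [NormedSpace ℝ S] [FiniteDimensional ℝ S]
    (p : ℕ) (hp : 0 < p)
    (q : MultilinearMap ℝ (fun _ : Fin p => V) S)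
    (hsymm : ∀ (σ : Equiv.Perm (Fin p)) (v : Fin p → V), q (v ∘ σ) = q v)
    (huniv : ∀ (U : Type) [AddCommGroup U] [Module ℝ U]
      (T : MultilinearMap ℝ (fun _ : Fin p => V) U),
      (∀ (σ : Equiv.Perm (Fin p)) (v : Fin p → V), T (v ∘ σ) = T v) →
      ∃! t : S →ₗ[ℝ] U, ∀ v : Fin p → V, t (q v) = T v)
    (C : Set V) (hC : IsACCone C) :
    IsACCone {s : S | ∃ (k : ℕ) (c : Fin k → ℝ) (v : Fin k → Fin p → V),
      (∀ j, 0 ≤ c j) ∧ (∀ j i, v j i ∈ C) ∧ s = ∑ j, c j • q (v j)} := by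
  classical
  obtain ⟨hadd, hsmul, hclosed, hpointed, hint⟩ := hC
  set cone := {s : S | ∃ (k : ℕ) (c : Fin k → ℝ) (v : Fin k → Fin p → V),
      (∀ j, 0 ≤ c j) ∧ (∀ j i, v j i ∈ C) ∧ s = ∑ j, c j • q (v j)} with hcone
  -- q of anything with a zero coordinate is zero
  have hq0 : ∀ (v : Fin p → V) (i : Fin p), v i = 0 → q v = 0 := by
    intro v i hvi
    have : v = Function.update v i 0 := by
      funext j
      by_cases hj : j = i
      · subst hj; simpa using hvi
      · simp [Function.update, hj]
    rw [this]
    exact q.map_update_zero v i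
  -- 0 is in the cone
  have hzero : (0 : S) ∈ cone := ⟨0, 0, 0, fun j => le_refl 0, fun j => j.elim0, by simp⟩
  -- cone is closed under addition
  have coneAdd : ∀ x ∈ cone, ∀ y ∈ cone, x + y ∈ cone := by
    rintro x ⟨k, c, v, hc, hv, rfl⟩ y ⟨k', c', v', hc', hv', rfl⟩
    refine ⟨k + k', Fin.append c c', Fin.append v v', ?_, ?_, ?_⟩
    · intro j
      refine Fin.addCases (fun i => ?_) (fun i => ?_) j
      · rw [Fin.append_left]; exact hc i
      · rw [Fin.append_right]; exact hc' i
    · intro j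
      refine Fin.addCases (fun i => ?_) (fun i => ?_) j
      · intro i'; rw [Fin.append_left]; exact hv i i'
      · intro i'; rw [Fin.append_right]; exact hv' i i'
    · rw [Fin.sum_univ_add]
      simp only [Fin.append_left, Fin.append_right]
  -- cone is closed under nonnegative scaling
  have coneSmul : ∀ a : ℝ, 0 ≤ a → ∀ x ∈ cone, a • x ∈ cone := by
    rintro a ha x ⟨k, c, v, hc, hv, rfl⟩
    refine ⟨k, fun j => a * c j, v, fun j => mul_nonneg ha (hc j), hv, ?_⟩
    rw [Finset.smul_sum]
    exact Finset.sum_congr rfl fun j _ => (mul_smul a (c j) (q (v j))).symm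
  -- the range of q spans S
  have hspan : Submodule.span ℝ (Set.range fun v : Fin p → V => q v) = ⊤ := by
    by_contra hW
    set W := Submodule.span ℝ (Set.range fun v : Fin p → V => q v) with hWdef
    obtain ⟨x, hx⟩ : ∃ x : S, x ∉ W := by
      by_contra h; push_neg at h; exact hW (Submodule.eq_top_iff'.2 h)
    have hWc : IsClosed (W : Set S) := Submodule.closed_of_finiteDimensional W
    obtain ⟨f, u, hfu, hsep⟩ := geometric_hahn_banach_point_closed
      (W.convex) hWc hx
    have hu : u < 0 := by simpa using hsep 0 W.zero_mem
    have hfW : ∀ y ∈ W, f y = 0 := by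
      intro y hy
      by_contra hfy
      have h1 : ((u - 1) / f y) • y ∈ W := W.smul_mem _ hy
      have h2 := hsep _ h1
      rw [map_smul, smul_eq_mul, div_mul_cancel₀ _ hfy] at h2
      linarith
    obtain ⟨t, ht, huniq⟩ := huniv ℝ (0 : MultilinearMap ℝ (fun _ : Fin p => V) ℝ)
      (fun σ v => rfl)
    have e1 : (f : S →ₗ[ℝ] ℝ) = t :=
      huniq _ (fun v => hfW _ (Submodule.subset_span ⟨v, rfl⟩))
    have e2 : (0 : S →ₗ[ℝ] ℝ) = t := huniq _ (fun v => rfl)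
    have : f x = 0 := by
      have := congrFun (congrArg (fun (z : S →ₗ[ℝ] ℝ) => (z : S → ℝ)) (e1.trans e2.symm)) x
      simpa using this
    linarith [hfu, hu, this]
  -- the map v ↦ q v is continuous
  have hqcont : Continuous fun v : Fin p → V => q v := by
    set d := finrank ℝ V with hd
    set b := finBasis ℝ V with hb
    have hrep : (fun v : Fin p → V => q v) = fun v : Fin p → V =>
        ∑ r : Fin p → Fin d, (∏ i, b.repr (v i) (r i)) • q (fun i => b (r i)) := by
      funext v
      have hv : v = fun i => ∑ x : Fin d, b.repr (v i) x • b x := by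
        funext i; exact (b.sum_repr (v i)).symm
      conv_lhs => rw [hv]
      rw [q.map_sum]
      exact Finset.sum_congr rfl fun r _ => q.map_smul_univ _ _
    rw [hrep]
    refine continuous_finset_sum _ fun r _ => Continuous.smul ?_ continuous_const
    refine continuous_finset_prod _ fun i _ => ?_
    exact ((b.coord (r i)).continuous_of_finiteDimensional).comp (continuous_apply i)
  have h0C : (0 : V) ∈ C := by
    have : (0 : V) ∈ C ∩ (-C) := by rw [hpointed]; exact rfl
    exact this.1
  rcases subsingleton_or_nontrivial V with hV | hV
  · -- subsingleton case : S is trivial, cone is everything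
    have hq0' : ∀ v : Fin p → V, q v = 0 := fun v => hq0 v ⟨0, hp⟩ (Subsingleton.elim _ _)
    have hS : ∀ x : S, x = 0 := by
      intro x
      have hx : x ∈ (⊤ : Submodule ℝ S) := trivial
      rw [← hspan] at hx
      have hsub : (Set.range fun v : Fin p → V => q v) ⊆ {0} := by
        rintro s ⟨v, rfl⟩; exact hq0' v
      have := Submodule.span_mono hsub hx
      simpa using this
    have hconeeq : cone = Set.univ :=
      Set.eq_univ_of_forall (fun x => by rw [hS x]; exact hzero)
    refine ⟨coneAdd, coneSmul, ?_, ?_, ?_⟩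
    · rw [hconeeq]; exact isClosed_univ
    · rw [hconeeq]
      ext x
      simp [Set.mem_singleton_iff, hS x]
    · rw [hconeeq, interior_univ]; exact ⟨0, trivial⟩
  -- nontrivial case
  obtain ⟨f, u, hu, hf⟩ := myExistsPosFunctional hadd hsmul hclosed hpointed
  have hf0 : ∀ x ∈ C, 0 ≤ f x := fun x hx =>
    le_trans (mul_nonneg hu.le (norm_nonneg x)) (hf x hx)
  have hfpos : ∀ x ∈ C, x ≠ 0 → 0 < f x := fun x hx hx0 =>
    lt_of_lt_of_le (mul_pos hu (norm_pos_iff.2 hx0)) (hf x hx)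
  -- the product functional g on S
  obtain ⟨g, hgq, -⟩ := huniv ℝ ((MultilinearMap.mkPiAlgebra ℝ (Fin p) ℝ).compLinearMap
      (fun _ => (f : V →ₗ[ℝ] ℝ)))
      (by
        intro σ v
        simp only [MultilinearMap.compLinearMap_apply, MultilinearMap.mkPiAlgebra_apply,
          Function.comp_apply]
        exact Equiv.prod_comp σ fun i => f (v i))
  have hg : ∀ v : Fin p → V, g (q v) = ∏ i, f (v i) := fun v => by
    simpa using hgq v
  have hgc : Continuous g := g.continuous_of_finiteDimensional
  -- g is nonnegative on the cone
  have hgcone : ∀ s ∈ cone, 0 ≤ g s := by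
    rintro s ⟨k, c, v, hc, hv, rfl⟩
    rw [map_sum]
    refine Finset.sum_nonneg fun j _ => ?_
    rw [map_smul, smul_eq_mul, hg]
    exact mul_nonneg (hc j) (Finset.prod_nonneg fun i _ => hf0 _ (hv j i))
  -- every vector is a difference of elements of C
  obtain ⟨e, he⟩ := hint
  have hdiff : ∀ x : V, ∃ a ∈ C, ∃ b ∈ C, x = a - b := by
    intro x
    rcases eq_or_ne x 0 with rfl | hx0
    · exact ⟨0, h0C, 0, h0C, by simp⟩
    · obtain ⟨ε, hε, hball⟩ := Metric.isOpen_iff.1 isOpen_interior e he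
      have hxn : 0 < ‖x‖ := norm_pos_iff.2 hx0
      set δ := ε / (2 * ‖x‖) with hδdef
      have hδ : 0 < δ := by positivity
      have h1 : e + δ • x ∈ C := by
        apply interior_subset
        apply hball
        rw [Metric.mem_ball, dist_eq_norm]
        have h2 : e + δ • x - e = δ • x := by abel
        rw [h2, norm_smul, Real.norm_eq_abs, abs_of_pos hδ, hδdef]
        rw [div_mul_eq_mul_div, mul_comm]
        have h3 : ‖x‖ * ε / (2 * ‖x‖) = ε / 2 := by
          field_simp
        rw [h3]
        linarith
      refine ⟨δ⁻¹ • (e + δ • x), hsmul _ (by positivity) _ h1,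
        δ⁻¹ • e, hsmul _ (by positivity) _ (interior_subset he), ?_⟩
      rw [← smul_sub]
      have h2 : e + δ • x - e = δ • x := by abel
      rw [h2, smul_smul, inv_mul_cancel₀ hδ.ne', one_smul]
  refine ⟨coneAdd, coneSmul, ?_, ?_, ?_⟩
  -- CLOSEDNESS
  · obtain ⟨x₁, hx₁C, hx₁⟩ : ∃ x, x ∈ C ∧ x ≠ 0 := by
      obtain ⟨z, hz⟩ := exists_ne (0 : V)
      obtain ⟨a, ha, b, hb, hab⟩ := hdiff z
      by_cases hA : a = 0
      · refine ⟨b, hb, fun h => hz ?_⟩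
        rw [hab, hA, h, sub_zero]
      · exact ⟨a, ha, hA⟩
    set x₂ := (f x₁)⁻¹ • x₁ with hx₂
    have hfx₁ : f x₁ ≠ 0 := (hfpos x₁ hx₁C hx₁).ne'
    have hx₂B : x₂ ∈ C ∧ f x₂ = 1 := by
      constructor
      · exact hsmul _ (inv_nonneg.2 (hf0 _ hx₁C)) _ hx₁C
      · rw [hx₂, map_smul, smul_eq_mul, inv_mul_cancel₀ hfx₁]
    set B := {x : V | x ∈ C ∧ f x = 1} with hB
    have hBclosed : IsClosed B := by
      have hBeq : B = C ∩ (⇑f) ⁻¹' {1} := by ext x; simp [hB]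
      rw [hBeq]
      exact hclosed.inter (isClosed_singleton.preimage f.continuous)
    have hBbdd : Bornology.IsBounded B := by
      rw [isBounded_iff_forall_norm_le]
      refine ⟨u⁻¹, fun x hx => ?_⟩
      have h1 := hf x hx.1
      rw [hx.2] at h1
      rw [← one_div, le_div_iff₀ hu]
      linarith
    have hBc : IsCompact B := Metric.isCompact_of_isClosed_isBounded hBclosed hBbdd
    set K := (fun v : Fin p → V => q v) '' (Set.univ.pi fun _ : Fin p => B) with hK
    have hKc : IsCompact K := (isCompact_univ_pi fun _ => hBc).image hqcont
    have hy₀ : q (fun _ => x₂) ∈ K := ⟨fun _ => x₂, fun i _ => hx₂B, rfl⟩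
    set y₀ := q (fun _ => x₂) with hy₀def
    set D := convexHull ℝ K with hD
    have hDc : IsCompact D := myIsCompactConvexHull hKc
    have hKg : ∀ x ∈ K, g x = 1 := by
      rintro _ ⟨w, hw, rfl⟩
      rw [hg]
      exact Finset.prod_eq_one fun i _ => (hw i (Set.mem_univ i)).2
    have hDg : ∀ x ∈ D, g x = 1 := by
      intro x hx
      have hcv : Convex ℝ {x : S | g x = 1} := by
        intro a ha b hb s' t' hs' ht' hst
        simp only [Set.mem_setOf_eq] at *
        rw [map_add, map_smul, map_smul, smul_eq_mul, smul_eq_mul, ha, hb, mul_one, mul_one, hst]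
      exact convexHull_min hKg hcv hx
    have hKcone : K ⊆ cone := by
      rintro _ ⟨w, hw, rfl⟩
      exact ⟨1, fun _ => 1, fun _ => w, fun j => zero_le_one,
        fun j i => (hw i (Set.mem_univ i)).1, by simp⟩
    have hconvex : Convex ℝ cone := fun x hx y hy a b ha hb hab =>
      coneAdd _ (coneSmul a ha x hx) _ (coneSmul b hb y hy)
    have hDcone : D ⊆ cone := convexHull_min hKcone hconvex
    have hrepr : cone = {s : S | ∃ c : ℝ, 0 ≤ c ∧ ∃ x ∈ D, s = c • x} := by
      apply Set.Subset.antisymm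
      · rintro s ⟨k, c, v, hc, hv, rfl⟩
        have hterm : ∀ j : Fin k, ∃ d : ℝ, 0 ≤ d ∧ ∃ y ∈ K, c j • q (v j) = d • y := by
          intro j
          by_cases hz : ∀ i, v j i ≠ 0
          · set w := fun i => (f (v j i))⁻¹ • v j i with hw
            have hfne : ∀ i, f (v j i) ≠ 0 := fun i => (hfpos _ (hv j i) (hz i)).ne'
            have hwB : ∀ i, w i ∈ B := fun i =>
              ⟨hsmul _ (inv_nonneg.2 (hf0 _ (hv j i))) _ (hv j i), by
                simp only [hw, map_smul, smul_eq_mul]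
                rw [inv_mul_cancel₀ (hfne i)]⟩
            refine ⟨c j * ∏ i, f (v j i),
              mul_nonneg (hc j) (Finset.prod_nonneg fun i _ => hf0 _ (hv j i)),
              q w, ⟨w, fun i _ => hwB i, rfl⟩, ?_⟩
            have hqw : q w = (∏ i, (f (v j i))⁻¹) • q (v j) := q.map_smul_univ _ _
            rw [hqw, smul_smul]
            congr 1
            rw [mul_assoc, ← Finset.prod_mul_distrib]
            have hone : ∀ i ∈ Finset.univ, f (v j i) * (f (v j i))⁻¹ = 1 :=
              fun i _ => mul_inv_cancel₀ (hfne i)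
            rw [Finset.prod_congr rfl hone, Finset.prod_const_one, mul_one]
          · push_neg at hz
            obtain ⟨i, hi⟩ := hz
            exact ⟨0, le_refl 0, y₀, hy₀, by rw [hq0 _ i hi, smul_zero, zero_smul]⟩
        choose d hd y hy hdy using hterm
        have hs : ∑ j, c j • q (v j) = ∑ j, d j • y j := Finset.sum_congr rfl fun j _ => hdy j
        rcases eq_or_lt_of_le (Finset.sum_nonneg fun (j : Fin k) (_ : j ∈ Finset.univ) => hd j)
          with h | h
        · have hall : ∀ j ∈ Finset.univ, d j = 0 :=
            (Finset.sum_eq_zero_iff_of_nonneg fun j _ => hd j).1 h.symm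
          refine ⟨0, le_refl 0, y₀, subset_convexHull ℝ K hy₀, ?_⟩
          rw [hs, zero_smul]
          exact Finset.sum_eq_zero fun j _ => by rw [hall j (Finset.mem_univ j), zero_smul]
        · refine ⟨∑ j, d j, le_of_lt h, Finset.univ.centerMass d y,
            Finset.centerMass_mem_convexHull _ (fun j _ => hd j) h (fun j _ => hy j), ?_⟩
          rw [hs, Finset.centerMass, smul_smul, mul_inv_cancel₀ (ne_of_gt h), one_smul]
      · rintro s ⟨c, hc, x, hx, rfl⟩
        exact coneSmul c hc x (hDcone hx)
    rw [hrepr]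
    apply IsSeqClosed.isClosed
    intro xs s hxs hlim
    choose cs hcs ys hys hxsy using hxs
    have hgxs : ∀ n, g (xs n) = cs n := fun n => by
      rw [hxsy n, map_smul, smul_eq_mul, hDg _ (hys n), mul_one]
    have hglim : Filter.Tendsto cs Filter.atTop (nhds (g s)) := by
      have h1 : Filter.Tendsto (fun n => g (xs n)) Filter.atTop (nhds (g s)) :=
        (hgc.tendsto s).comp hlim
      exact (funext hgxs : (fun n => g (xs n)) = cs) ▸ h1
    obtain ⟨y, hyD, φ, hφ, hyconv⟩ := hDc.tendsto_subseq hys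
    have h1 : Filter.Tendsto (cs ∘ φ) Filter.atTop (nhds (g s)) := hglim.comp hφ.tendsto_atTop
    have h2 : Filter.Tendsto (fun n => (cs ∘ φ) n • (ys ∘ φ) n) Filter.atTop (nhds (g s • y)) :=
      h1.smul hyconv
    have h3 : Filter.Tendsto (fun n => xs (φ n)) Filter.atTop (nhds s) := hlim.comp hφ.tendsto_atTop
    have hseq : (fun n => xs (φ n)) = fun n => (cs ∘ φ) n • (ys ∘ φ) n :=
      funext fun n => hxsy (φ n)
    have hslim : s = g s • y := tendsto_nhds_unique (hseq ▸ h3) h2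
    have hgs0 : 0 ≤ g s := le_of_tendsto_of_tendsto' tendsto_const_nhds hglim (fun n => hcs n)
    exact ⟨g s, hgs0, y, hyD, hslim⟩
  -- POINTEDNESS
  · apply Set.Subset.antisymm
    · rintro s ⟨hs1, hs2⟩
      have h1 : 0 ≤ g s := hgcone s hs1
      have h2 : 0 ≤ g (-s) := hgcone _ (Set.mem_neg.1 hs2)
      rw [map_neg] at h2
      have hgs : g s = 0 := le_antisymm (by linarith) h1
      obtain ⟨k, c, v, hc, hv, hs⟩ := hs1
      have hsum : ∑ j, c j * ∏ i, f (v j i) = 0 := by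
        have h3 : g s = ∑ j, c j * ∏ i, f (v j i) := by
          rw [hs, map_sum]
          exact Finset.sum_congr rfl fun j _ => by rw [map_smul, smul_eq_mul, hg]
        rw [← h3, hgs]
      have hterm0 : ∀ j ∈ Finset.univ, c j * ∏ i, f (v j i) = 0 :=
        (Finset.sum_eq_zero_iff_of_nonneg fun j _ =>
          mul_nonneg (hc j) (Finset.prod_nonneg fun i _ => hf0 _ (hv j i))).1 hsum
      have hterm : ∀ j, c j • q (v j) = 0 := by
        intro j
        rcases mul_eq_zero.1 (hterm0 j (Finset.mem_univ j)) with h | h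
        · rw [h, zero_smul]
        · obtain ⟨i, -, hfi⟩ := Finset.prod_eq_zero_iff.1 h
          have hvi : v j i = 0 := by
            by_contra hne
            exact absurd hfi (ne_of_gt (hfpos _ (hv j i) hne))
          rw [hq0 _ i hvi, smul_zero]
      rw [Set.mem_singleton_iff, hs]
      exact Finset.sum_eq_zero fun j _ => hterm j
    · intro s hs
      rw [Set.mem_singleton_iff] at hs
      subst hs
      exact ⟨hzero, by rw [Set.mem_neg, neg_zero]; exact hzero⟩
  -- INTERIOR
  · have hconvex : Convex ℝ cone := by
      intro x hx y hy a b ha hb hab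
      exact coneAdd _ (coneSmul a ha x hx) _ (coneSmul b hb y hy)
    rw [hconvex.interior_nonempty_iff_affineSpan_eq_top]
    have hqC : ∀ v : Fin p → V, (∀ i, v i ∈ C) → q v ∈ Submodule.span ℝ cone := by
      intro v hv
      refine Submodule.subset_span ⟨1, fun _ => 1, fun _ => v, fun j => zero_le_one,
        fun j i => hv i, by simp⟩
    have key : ∀ (k : ℕ) (v : Fin p → V), (∀ i : Fin p, k ≤ (i : ℕ) → v i ∈ C) →
        q v ∈ Submodule.span ℝ cone := by
      intro k
      induction k with
      | zero => exact fun v hv => hqC v (fun i => hv i (Nat.zero_le _))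
      | succ k ih =>
        intro v hv
        by_cases hk : k < p
        · set i₀ : Fin p := ⟨k, hk⟩ with hi₀
          obtain ⟨a, ha, b, hb, hab⟩ := hdiff (v i₀)
          have hv' : v = Function.update v i₀ (a - b) := by
            funext j
            by_cases hj : j = i₀
            · subst hj; simp [← hab]
            · simp [Function.update, hj]
          rw [hv', q.map_update_sub]
          have harg : ∀ x : V, x ∈ C → ∀ i : Fin p, (k : ℕ) ≤ (i : ℕ) →
              Function.update v i₀ x i ∈ C := by
            intro x hx i hi
            by_cases hj : i = i₀
            · subst hj; simp [hx]
            · rw [Function.update_of_ne hj]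
              apply hv
              have : (i : ℕ) ≠ k := fun hik => hj (Fin.ext hik)
              omega
          exact sub_mem (ih _ (harg a ha)) (ih _ (harg b hb))
        · exact ih v (fun i hi => absurd i.isLt (by omega))
    have hspanc : Submodule.span ℝ cone = ⊤ := by
      rw [eq_top_iff, ← hspan]
      refine Submodule.span_le.2 ?_
      rintro s ⟨v, rfl⟩
      exact key p v (fun i hi => absurd i.isLt (by omega))
    -- from linear span to affine span
    rw [AffineSubspace.affineSpan_eq_top_iff_vectorSpan_eq_top_of_nonempty ℝ S S ⟨0, hzero⟩]
    rw [eq_top_iff, ← hspanc]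
    refine Submodule.span_le.2 fun x hx => ?_
    have h4 : x -ᵥ (0 : S) ∈ cone -ᵥ cone := Set.vsub_mem_vsub hx hzero
    rw [vsub_eq_sub, sub_zero] at h4
    rw [vectorSpan_def]
    exact Submodule.subset_span h4
end

section
/- Let A ⊆ V_A and B ⊆ V_B be almost compact cones in finite-dimensional real vector spaces and let F_A and F_B be faces of A and B respectively. Then the cone F_A ⊗ F_B, consisting of all finite sums ∑ᵢ aᵢ ⊗ bᵢ with aᵢ ∈ F_A and bᵢ ∈ F_B, is a face of A ⊗ B. If moreover F_A and F_B are exposed faces of A and B, then F_A ⊗ F_B is an exposed face of A ⊗ B. -/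
set_option linter.unusedSectionVars false

open scoped TensorProduct

/-- `F` is a face of the convex cone `C`: a subcone of `C` such that whenever
`x + y ∈ F` with `x, y ∈ C` one has `x, y ∈ F`. -/
def IsConeFace {V : Type*} [AddCommGroup V] [Module ℝ V] (C F : Set V) : Prop :=
  F ⊆ C ∧ (∀ x ∈ F, ∀ y ∈ F, x + y ∈ F) ∧ (∀ c : ℝ, 0 ≤ c → ∀ x ∈ F, c • x ∈ F) ∧
  (∀ x ∈ C, ∀ y ∈ C, x + y ∈ F → x ∈ F ∧ y ∈ F)

/-- `F` is an exposed face of the convex cone `C`: there is a linear functional `φ`,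
nonnegative on `C`, with `F = C ∩ ker φ`. -/
def IsExposedConeFace {V : Type*} [AddCommGroup V] [Module ℝ V] (C F : Set V) : Prop :=
  ∃ φ : V →ₗ[ℝ] ℝ, (∀ x ∈ C, 0 ≤ φ x) ∧ F = C ∩ {x | φ x = 0}

/-- The tensor product cone `C₁ ⊗ C₂ ⊆ V₁ ⊗ V₂`: all finite sums `∑ᵢ cᵢ ⊗ dᵢ` with
`cᵢ ∈ C₁` and `dᵢ ∈ C₂`. -/
def tensorCone {V₁ V₂ : Type*} [AddCommGroup V₁] [Module ℝ V₁] [AddCommGroup V₂] [Module ℝ V₂]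
    (C₁ : Set V₁) (C₂ : Set V₂) : Set (V₁ ⊗[ℝ] V₂) :=
  {z | ∃ (k : ℕ) (a : Fin k → V₁) (b : Fin k → V₂),
    (∀ j, a j ∈ C₁) ∧ (∀ j, b j ∈ C₂) ∧ z = ∑ j, a j ⊗ₜ[ℝ] b j}

/-! ### Helpers on pointed cones and faces -/

section pointed
variable {V : Type*} [AddCommGroup V] [Module ℝ V]

lemma zero_mem_of_pointed {C : Set V} (h : C ∩ (-C) = {0}) : (0 : V) ∈ C := by
  have : (0 : V) ∈ C ∩ (-C) := by rw [h]; exact Set.mem_singleton 0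
  exact this.1

lemma eq_zero_of_add_eq_zero {C : Set V} (h : C ∩ (-C) = {0}) {x y : V}
    (hx : x ∈ C) (hy : y ∈ C) (hxy : x + y = 0) : x = 0 ∧ y = 0 := by
  have hxm : -x = y := by rw [neg_eq_iff_add_eq_zero]; exact hxy
  have hxC : x ∈ C ∩ (-C) := ⟨hx, by rw [Set.mem_neg]; rwa [hxm]⟩
  rw [h] at hxC
  have hx0 : x = 0 := hxC
  exact ⟨hx0, by rw [← hxm, hx0, neg_zero]⟩

lemma sum_mem_set {C : Set V} (h0 : (0:V) ∈ C)
    (hadd : ∀ x ∈ C, ∀ y ∈ C, x + y ∈ C) {ι : Type*} {s : Finset ι} {f : ι → V}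
    (h : ∀ i ∈ s, f i ∈ C) : ∑ i ∈ s, f i ∈ C :=
  Finset.sum_induction f (· ∈ C) (fun a b ha hb => hadd a ha b hb) h0 h

lemma face_of_sum {A F : Set V} (h0 : (0:V) ∈ A)
    (hadd : ∀ x ∈ A, ∀ y ∈ A, x + y ∈ A) (hF : IsConeFace A F) :
    ∀ {n : ℕ} (x : Fin n → V), (∀ j, x j ∈ A) → (∑ j, x j) ∈ F → ∀ j, x j ∈ F := by
  intro n
  induction n with
  | zero => intro x _ _ j; exact j.elim0
  | succ n ih =>
    intro x hx hs j
    have htail : ∑ i : Fin n, x i.succ ∈ A := sum_mem_set h0 hadd (fun i _ => hx i.succ)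
    rw [Fin.sum_univ_succ] at hs
    obtain ⟨h1, h2⟩ := hF.2.2.2 _ (hx 0) _ htail hs
    exact Fin.cases h1 (fun i => ih (fun i => x i.succ) (fun i => hx i.succ) h2 i) j

lemma face_insert_zero {A F : Set V} (hpt : A ∩ (-A) = {0}) (hF : IsConeFace A F) :
    IsConeFace A (insert 0 F) := by
  obtain ⟨hsub, hadd, hsmul, hface⟩ := hF
  refine ⟨?_, ?_, ?_, ?_⟩
  · rintro x (rfl | hx)
    · exact zero_mem_of_pointed hpt
    · exact hsub hx
  · rintro x (rfl | hx) y (rfl | hy)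
    · simp
    · simpa using Or.inr hy
    · simpa using Or.inr hx
    · exact Or.inr (hadd x hx y hy)
  · rintro c hc x (rfl | hx)
    · simp
    · exact Or.inr (hsmul c hc x hx)
  · intro x hx y hy hxy
    rcases hxy with h0 | hxyF
    · obtain ⟨h1, h2⟩ := eq_zero_of_add_eq_zero hpt hx hy h0
      exact ⟨Or.inl h1, Or.inl h2⟩
    · obtain ⟨h1, h2⟩ := hface x hx y hy hxyF
      exact ⟨Or.inr h1, Or.inr h2⟩

end pointed

/-! ### Basic properties of `tensorCone` -/

section tc
variable {V₁ V₂ : Type*} [AddCommGroup V₁] [Module ℝ V₁] [AddCommGroup V₂] [Module ℝ V₂]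
  {C₁ : Set V₁} {C₂ : Set V₂}

lemma zero_mem_tensorCone : (0 : V₁ ⊗[ℝ] V₂) ∈ tensorCone C₁ C₂ :=
  ⟨0, Fin.elim0, Fin.elim0, fun j => j.elim0, fun j => j.elim0, by simp⟩

lemma tmul_mem_tensorCone {a : V₁} {b : V₂} (ha : a ∈ C₁) (hb : b ∈ C₂) :
    a ⊗ₜ[ℝ] b ∈ tensorCone C₁ C₂ :=
  ⟨1, fun _ => a, fun _ => b, fun _ => ha, fun _ => hb, by simp⟩

lemma add_mem_tensorCone {x y : V₁ ⊗[ℝ] V₂} (hx : x ∈ tensorCone C₁ C₂)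
    (hy : y ∈ tensorCone C₁ C₂) : x + y ∈ tensorCone C₁ C₂ := by
  obtain ⟨k, a, b, ha, hb, rfl⟩ := hx
  obtain ⟨m, c, d, hc, hd, rfl⟩ := hy
  refine ⟨k + m, Fin.append a c, Fin.append b d, ?_, ?_, ?_⟩
  · exact Fin.addCases (fun i => by rw [Fin.append_left]; exact ha i)
      (fun i => by rw [Fin.append_right]; exact hc i)
  · exact Fin.addCases (fun i => by rw [Fin.append_left]; exact hb i)
      (fun i => by rw [Fin.append_right]; exact hd i)
  · rw [Fin.sum_univ_add]
    simp [Fin.append_left, Fin.append_right]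

lemma smul_mem_tensorCone (h₁ : ∀ c : ℝ, 0 ≤ c → ∀ x ∈ C₁, c • x ∈ C₁) {c : ℝ} (hc : 0 ≤ c)
    {x : V₁ ⊗[ℝ] V₂} (hx : x ∈ tensorCone C₁ C₂) : c • x ∈ tensorCone C₁ C₂ := by
  obtain ⟨k, a, b, ha, hb, rfl⟩ := hx
  exact ⟨k, fun j => c • a j, b, fun j => h₁ c hc _ (ha j), hb, by
    rw [Finset.smul_sum]; simp [TensorProduct.smul_tmul']⟩

lemma sum_mem_tensorCone {ι : Type*} (s : Finset ι) (f : ι → V₁ ⊗[ℝ] V₂)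
    (h : ∀ i ∈ s, f i ∈ tensorCone C₁ C₂) : ∑ i ∈ s, f i ∈ tensorCone C₁ C₂ :=
  Finset.sum_induction f (· ∈ tensorCone C₁ C₂) (fun _ _ ha hb => add_mem_tensorCone ha hb)
    zero_mem_tensorCone h

lemma tensorCone_insert_zero (C₁ : Set V₁) (C₂ : Set V₂) :
    tensorCone (insert 0 C₁) (insert 0 C₂) = tensorCone C₁ C₂ := by
  apply Set.Subset.antisymm
  · rintro z ⟨k, a, b, ha, hb, rfl⟩
    classical
    have hkey : ∀ j ∈ Finset.univ (α := Fin k), a j ⊗ₜ[ℝ] b j ≠ 0 →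
        (a j ∈ C₁ ∧ b j ∈ C₂) := by
      intro j _ hne
      rcases ha j with h0 | h1
      · exact absurd (by rw [h0, TensorProduct.zero_tmul]) hne
      rcases hb j with h0 | h2
      · exact absurd (by rw [h0, TensorProduct.tmul_zero]) hne
      exact ⟨h1, h2⟩
    rw [← Finset.sum_filter_of_ne hkey]
    exact sum_mem_tensorCone _ _ (fun j hj => by
      have := (Finset.mem_filter.1 hj).2
      exact tmul_mem_tensorCone this.1 this.2)
  · rintro z ⟨k, a, b, ha, hb, rfl⟩
    exact ⟨k, a, b, fun j => Set.mem_insert_of_mem _ (ha j),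
      fun j => Set.mem_insert_of_mem _ (hb j), rfl⟩

end tc

/-! ### Existence of a strictly positive functional on an almost compact cone -/

open scoped RealInnerProductSpace in
lemma exists_strict_pos_euclidean {n : ℕ} (C : Set (EuclideanSpace ℝ (Fin n)))
    (hadd : ∀ x ∈ C, ∀ y ∈ C, x + y ∈ C) (hsmul : ∀ c : ℝ, 0 ≤ c → ∀ x ∈ C, c • x ∈ C)
    (hcl : IsClosed C) (hpt : C ∩ (-C) = {0}) :
    ∃ e : EuclideanSpace ℝ (Fin n) →ₗ[ℝ] ℝ,
      (∀ x ∈ C, 0 ≤ e x) ∧ ∀ x ∈ C, x ≠ 0 → 0 < e x := by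
  have h0 : (0 : EuclideanSpace ℝ (Fin n)) ∈ C := by
    have : (0 : EuclideanSpace ℝ (Fin n)) ∈ C ∩ (-C) := by rw [hpt]; exact Set.mem_singleton 0
    exact this.1
  set K : ConvexCone ℝ (EuclideanSpace ℝ (Fin n)) :=
    { carrier := C
      smul_mem' := fun {c} hc {x} hx => hsmul c hc.le x hx
      add_mem' := fun {x} hx {y} hy => hadd x hx y hy } with hK
  set D : Set (EuclideanSpace ℝ (Fin n)) := {y | ∀ x ∈ C, 0 ≤ ⟪x, y⟫} with hD
  have hspan : Submodule.span ℝ D = ⊤ := by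
    by_contra hne
    have hbot : (Submodule.span ℝ D)ᗮ ≠ ⊥ := by
      rwa [Ne, Submodule.orthogonal_eq_bot_iff]
    obtain ⟨v, hv, hv0⟩ := Submodule.ne_bot_iff _ |>.1 hbot
    have hvD : ∀ y ∈ D, ⟪y, v⟫ = 0 := fun y hy =>
      (Submodule.mem_orthogonal _ v).1 hv y (Submodule.subset_span hy)
    have hmem : ∀ w : EuclideanSpace ℝ (Fin n), (∀ y ∈ D, ⟪y, w⟫ = 0) → w ∈ C := by
      intro w hw
      by_contra hwC
      obtain ⟨y, hy1, hy2⟩ : ∃ y, (∀ x ∈ C, 0 ≤ ⟪x, y⟫) ∧ ⟪y, w⟫ < 0 := by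
        obtain ⟨y, hy1, hy2⟩ := ProperCone.hyperplane_separation'
          (⟨⟨⟨⟨C, fun hx hy => hadd _ hx _ hy⟩, h0⟩,
            fun c x hx => hsmul c c.2 x hx⟩, hcl⟩ :
              ProperCone ℝ (EuclideanSpace ℝ (Fin n))) hwC
        exact ⟨y, hy1, by rwa [real_inner_comm]⟩
      have hyD : y ∈ D := fun x hx => hy1 x hx
      rw [hw y hyD] at hy2
      exact lt_irrefl 0 hy2
    have hvC : v ∈ C := hmem v hvD
    have hmvC : -v ∈ C := hmem (-v) (fun y hy => by rw [inner_neg_right, hvD y hy, neg_zero])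
    have : v ∈ C ∩ (-C) := ⟨hvC, by rwa [Set.mem_neg]⟩
    rw [hpt] at this
    exact hv0 this
  obtain ⟨T, hTD, hTspan, hTli⟩ := exists_linearIndependent ℝ D
  have hTfin : T.Finite := hTli.setFinite
  classical
  refine ⟨∑ y ∈ hTfin.toFinset, (innerₛₗ ℝ y), ?_, ?_⟩
  · intro x hx
    rw [LinearMap.sum_apply]
    refine Finset.sum_nonneg fun y hy => ?_
    have hyD : y ∈ D := hTD (hTfin.mem_toFinset.1 hy)
    have := hyD x hx
    rwa [innerₛₗ_apply_apply, real_inner_comm]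
  · intro x hx hx0
    rw [LinearMap.sum_apply]
    have hnn : ∀ y ∈ hTfin.toFinset, 0 ≤ (innerₛₗ ℝ y) x := by
      intro y hy
      have hyD : y ∈ D := hTD (hTfin.mem_toFinset.1 hy)
      have := hyD x hx
      rwa [innerₛₗ_apply_apply, real_inner_comm]
    rcases (Finset.sum_nonneg hnn).lt_or_eq with h | h
    · exact h
    exfalso
    have hall : ∀ y ∈ hTfin.toFinset, (innerₛₗ ℝ y) x = 0 :=
      (Finset.sum_eq_zero_iff_of_nonneg hnn).1 h.symm
    have hxT : ∀ y ∈ T, ⟪x, y⟫ = 0 := by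
      intro y hy
      have := hall y (hTfin.mem_toFinset.2 hy)
      rw [innerₛₗ_apply_apply] at this
      rw [real_inner_comm]; exact this
    have hxall : ∀ u : EuclideanSpace ℝ (Fin n), ⟪x, u⟫ = 0 := by
      intro u
      have hu : u ∈ Submodule.span ℝ T := by rw [hTspan, hspan]; trivial
      induction hu using Submodule.span_induction with
      | mem y hy => exact hxT y hy
      | zero => exact inner_zero_right x
      | add a b _ _ ha hb => rw [inner_add_right, ha, hb, add_zero]
      | smul c a _ ha => rw [inner_smul_right, ha, mul_zero]
    exact hx0 (inner_self_eq_zero.1 (hxall x))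

lemma exists_strict_pos {V : Type*} [NormedAddCommGroup V] [NormedSpace ℝ V]
    [FiniteDimensional ℝ V] (B : Set V) (hB : IsACCone B) :
    ∃ e : V →ₗ[ℝ] ℝ, (∀ x ∈ B, 0 ≤ e x) ∧ ∀ x ∈ B, x ≠ 0 → 0 < e x := by
  obtain ⟨hadd, hsmul, hcl, hpt, -⟩ := hB
  set φ := toEuclidean (E := V) with hφ
  set C : Set (EuclideanSpace ℝ (Fin (Module.finrank ℝ V))) := φ '' B with hC
  have hCadd : ∀ x ∈ C, ∀ y ∈ C, x + y ∈ C := by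
    rintro _ ⟨x, hx, rfl⟩ _ ⟨y, hy, rfl⟩
    exact ⟨x + y, hadd x hx y hy, by simp⟩
  have hCsmul : ∀ c : ℝ, 0 ≤ c → ∀ x ∈ C, c • x ∈ C := by
    rintro c hc _ ⟨x, hx, rfl⟩
    exact ⟨c • x, hsmul c hc x hx, by simp⟩
  have hCcl : IsClosed C := (φ.toHomeomorph.isClosedMap) B hcl
  have hCpt : C ∩ (-C) = {0} := by
    apply Set.Subset.antisymm
    · rintro z ⟨⟨x, hx, rfl⟩, hz2⟩
      rw [Set.mem_neg] at hz2
      obtain ⟨y, hy, hyz⟩ := hz2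
      have hxy : -x = y := φ.injective (by rw [map_neg, hyz])
      have hx' : x ∈ B ∩ (-B) := ⟨hx, by rw [Set.mem_neg, hxy]; exact hy⟩
      rw [hpt] at hx'
      have hx0 : x = 0 := hx'
      simp [hx0]
    · rintro z rfl
      have h0B : (0 : V) ∈ B := by
        have : (0 : V) ∈ B ∩ (-B) := by rw [hpt]; exact Set.mem_singleton 0
        exact this.1
      refine ⟨⟨0, h0B, by simp⟩, ?_⟩
      rw [Set.mem_neg, neg_zero]
      exact ⟨0, h0B, by simp⟩
  obtain ⟨e, he1, he2⟩ := exists_strict_pos_euclidean C hCadd hCsmul hCcl hCpt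
  refine ⟨e.comp (φ.toLinearEquiv : V →ₗ[ℝ] EuclideanSpace ℝ (Fin (Module.finrank ℝ V))), ?_, ?_⟩
  · intro x hx
    exact he1 (φ x) ⟨x, hx, rfl⟩
  · intro x hx hx0
    exact he2 (φ x) ⟨x, hx, rfl⟩ (by simpa using hx0)

/-! ### The main face argument -/

section main
variable {VA VB : Type*} [AddCommGroup VA] [Module ℝ VA] [AddCommGroup VB] [Module ℝ VB]

/-- contraction with a functional on the right factor -/
noncomputable def rApply (ψ : VB →ₗ[ℝ] ℝ) : VA ⊗[ℝ] VB →ₗ[ℝ] VA :=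
  TensorProduct.lift (LinearMap.mk₂ ℝ (fun x y => ψ y • x)
    (fun x x' y => smul_add _ x x')
    (fun c x y => smul_comm _ c x)
    (fun x y y' => by simp only [map_add, add_smul])
    (fun c x y => by simp only [map_smul, smul_eq_mul, mul_smul]))

@[simp] lemma rApply_tmul (ψ : VB →ₗ[ℝ] ℝ) (x : VA) (y : VB) :
    rApply ψ (x ⊗ₜ[ℝ] y) = ψ y • x := rfl

/-- contraction with a functional on the left factor -/
noncomputable def lApply (φ : VA →ₗ[ℝ] ℝ) : VA ⊗[ℝ] VB →ₗ[ℝ] VB :=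
  TensorProduct.lift (LinearMap.mk₂ ℝ (fun x y => φ x • y)
    (fun x x' y => by simp only [map_add, add_smul])
    (fun c x y => by simp only [map_smul, smul_eq_mul, mul_smul])
    (fun x y y' => smul_add _ y y')
    (fun c x y => smul_comm _ c y))

@[simp] lemma lApply_tmul (φ : VA →ₗ[ℝ] ℝ) (x : VA) (y : VB) :
    lApply φ (x ⊗ₜ[ℝ] y) = φ x • y := rfl

variable {A : Set VA} {B : Set VB}
  (hAadd : ∀ x ∈ A, ∀ y ∈ A, x + y ∈ A) (hAsmul : ∀ c : ℝ, 0 ≤ c → ∀ x ∈ A, c • x ∈ A)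
  (h0A : (0:VA) ∈ A)
  (hBadd : ∀ x ∈ B, ∀ y ∈ B, x + y ∈ B) (hBsmul : ∀ c : ℝ, 0 ≤ c → ∀ x ∈ B, c • x ∈ B)
  (h0B : (0:VB) ∈ B)
  {eA : VA →ₗ[ℝ] ℝ} {eB : VB →ₗ[ℝ] ℝ}
  (heA : ∀ x ∈ A, 0 ≤ eA x) (heA' : ∀ x ∈ A, x ≠ 0 → 0 < eA x)
  (heB : ∀ x ∈ B, 0 ≤ eB x) (heB' : ∀ x ∈ B, x ≠ 0 → 0 < eB x)
  {FA : Set VA} {FB : Set VB} (hFA : IsConeFace A FA) (hFB : IsConeFace B FB)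
  (h0FA : (0:VA) ∈ FA) (h0FB : (0:VB) ∈ FB)

include hAadd hAsmul h0A hBadd hBsmul h0B heA heA' heB heB' hFA hFB h0FA h0FB in
lemma tensor_face_terms {k : ℕ} {a : Fin k → VA} {b : Fin k → VB}
    (ha : ∀ j, a j ∈ A) (hb : ∀ j, b j ∈ B)
    (hz : ∑ j, a j ⊗ₜ[ℝ] b j ∈ tensorCone FA FB) :
    ∀ j, a j ⊗ₜ[ℝ] b j ∈ tensorCone FA FB := by
  obtain ⟨m, c, d, hc, hd, heq⟩ := hz
  have hLz : ∑ j, eB (b j) • a j = ∑ i, eB (d i) • c i := by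
    have h1 := congrArg (rApply (VA := VA) eB) heq
    rw [map_sum, map_sum] at h1
    simpa using h1
  have hmemA : ∑ i, eB (d i) • c i ∈ FA :=
    sum_mem_set h0FA hFA.2.1 (fun i _ => hFA.2.2.1 _ (heB (d i) (hFB.1 (hd i))) _ (hc i))
  have hFAj : ∀ j, eB (b j) • a j ∈ FA :=
    face_of_sum h0A hAadd hFA _ (fun j => hAsmul _ (heB _ (hb j)) _ (ha j))
      (by rw [hLz]; exact hmemA)
  have hMz : ∑ j, eA (a j) • b j = ∑ i, eA (c i) • d i := by
    have h1 := congrArg (lApply (VB := VB) eA) heq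
    rw [map_sum, map_sum] at h1
    simpa using h1
  have hmemB : ∑ i, eA (c i) • d i ∈ FB :=
    sum_mem_set h0FB hFB.2.1 (fun i _ => hFB.2.2.1 _ (heA (c i) (hFA.1 (hc i))) _ (hd i))
  have hFBj : ∀ j, eA (a j) • b j ∈ FB :=
    face_of_sum h0B hBadd hFB _ (fun j => hBsmul _ (heA _ (ha j)) _ (hb j))
      (by rw [hMz]; exact hmemB)
  intro j
  by_cases hbj : b j = 0
  · rw [hbj, TensorProduct.tmul_zero]; exact zero_mem_tensorCone
  by_cases haj : a j = 0
  · rw [haj, TensorProduct.zero_tmul]; exact zero_mem_tensorCone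
  have hbpos : 0 < eB (b j) := heB' _ (hb j) hbj
  have hapos : 0 < eA (a j) := heA' _ (ha j) haj
  have haF : a j ∈ FA := by
    have := hFA.2.2.1 (eB (b j))⁻¹ (by positivity) _ (hFAj j)
    rwa [smul_smul, inv_mul_cancel₀ hbpos.ne', one_smul] at this
  have hbF : b j ∈ FB := by
    have := hFB.2.2.1 (eA (a j))⁻¹ (by positivity) _ (hFBj j)
    rwa [smul_smul, inv_mul_cancel₀ hapos.ne', one_smul] at this
  exact tmul_mem_tensorCone haF hbF

include hAadd hAsmul h0A hBadd hBsmul h0B heA heA' heB heB' hFA hFB h0FA h0FB in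
lemma tensor_face_split {x y : VA ⊗[ℝ] VB} (hx : x ∈ tensorCone A B) (hy : y ∈ tensorCone A B)
    (hxy : x + y ∈ tensorCone FA FB) :
    x ∈ tensorCone FA FB ∧ y ∈ tensorCone FA FB := by
  obtain ⟨k, a, b, ha, hb, rfl⟩ := hx
  obtain ⟨m, c, d, hc, hd, rfl⟩ := hy
  have hrep : ((∑ j, a j ⊗ₜ[ℝ] b j) + ∑ i, c i ⊗ₜ[ℝ] d i)
      = ∑ j : Fin (k + m), Fin.append a c j ⊗ₜ[ℝ] Fin.append b d j := by
    rw [Fin.sum_univ_add]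
    simp [Fin.append_left, Fin.append_right]
  rw [hrep] at hxy
  have hterms := tensor_face_terms hAadd hAsmul h0A hBadd hBsmul h0B heA heA' heB heB'
    hFA hFB h0FA h0FB
    (a := Fin.append a c) (b := Fin.append b d)
    (Fin.addCases (fun i => by rw [Fin.append_left]; exact ha i)
      (fun i => by rw [Fin.append_right]; exact hc i))
    (Fin.addCases (fun i => by rw [Fin.append_left]; exact hb i)
      (fun i => by rw [Fin.append_right]; exact hd i)) hxy
  constructor
  · exact sum_mem_tensorCone _ _ (fun j _ => by
      have := hterms (Fin.castAdd m j)
      rwa [Fin.append_left, Fin.append_left] at this)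
  · exact sum_mem_tensorCone _ _ (fun i _ => by
      have := hterms (Fin.natAdd k i)
      rwa [Fin.append_right, Fin.append_right] at this)

end main

/-- If `F_A` and `F_B` are faces of the almost compact cones `A` and `B` then `F_A ⊗ F_B`
is a face of `A ⊗ B`; if moreover `F_A` and `F_B` are exposed, so is `F_A ⊗ F_B`. -/
theorem tensor_of_faces_is_face {VA VB : Type*}
    [NormedAddCommGroup VA] [NormedSpace ℝ VA] [FiniteDimensional ℝ VA]
    [NormedAddCommGroup VB] [NormedSpace ℝ VB] [FiniteDimensional ℝ VB]
    (A : Set VA) (B : Set VB) (hA : IsACCone A) (hB : IsACCone B)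
    (FA : Set VA) (FB : Set VB) (hFA : IsConeFace A FA) (hFB : IsConeFace B FB) :
    IsConeFace (tensorCone A B) (tensorCone FA FB) ∧
    (IsExposedConeFace A FA → IsExposedConeFace B FB →
      IsExposedConeFace (tensorCone A B) (tensorCone FA FB)) := by
  obtain ⟨eA, heA, heA'⟩ := exists_strict_pos A hA
  obtain ⟨eB, heB, heB'⟩ := exists_strict_pos B hB
  obtain ⟨hAadd, hAsmul, -, hApt, -⟩ := hA
  obtain ⟨hBadd, hBsmul, -, hBpt, -⟩ := hB
  have h0A := zero_mem_of_pointed hApt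
  have h0B := zero_mem_of_pointed hBpt
  constructor
  · -- the face statement
    have hFA' := face_insert_zero hApt hFA
    have hFB' := face_insert_zero hBpt hFB
    rw [← tensorCone_insert_zero FA FB]
    refine ⟨?_, fun x hx y hy => add_mem_tensorCone hx hy,
      fun c hc x hx => smul_mem_tensorCone hFA'.2.2.1 hc hx, ?_⟩
    · rintro z ⟨k, a, b, ha, hb, rfl⟩
      exact ⟨k, a, b, fun j => hFA'.1 (ha j), fun j => hFB'.1 (hb j), rfl⟩
    · intro x hx y hy hxy
      exact tensor_face_split hAadd hAsmul h0A hBadd hBsmul h0B heA heA' heB heB' hFA' hFB'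
        (Set.mem_insert 0 FA) (Set.mem_insert 0 FB) hx hy hxy
  · -- the exposedness statement
    rintro ⟨φ, hφ, hFAeq⟩ ⟨ψ, hψ, hFBeq⟩
    classical
    set Φ : VA ⊗[ℝ] VB →ₗ[ℝ] ℝ := TensorProduct.lift (LinearMap.mk₂ ℝ
      (fun x y => φ x * eB y + eA x * ψ y)
      (fun x x' y => by simp only [map_add]; ring)
      (fun c x y => by simp only [map_smul, smul_eq_mul]; ring)
      (fun x y y' => by simp only [map_add]; ring)
      (fun c x y => by simp only [map_smul, smul_eq_mul]; ring)) with hΦ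
    have hΦt : ∀ (x : VA) (y : VB), Φ (x ⊗ₜ[ℝ] y) = φ x * eB y + eA x * ψ y := fun x y => rfl
    refine ⟨Φ, ?_, ?_⟩
    · rintro z ⟨k, a, b, ha, hb, rfl⟩
      rw [map_sum]
      refine Finset.sum_nonneg fun j _ => ?_
      rw [hΦt]
      exact add_nonneg (mul_nonneg (hφ _ (ha j)) (heB _ (hb j)))
        (mul_nonneg (heA _ (ha j)) (hψ _ (hb j)))
    · apply Set.Subset.antisymm
      · rintro z ⟨k, a, b, ha, hb, rfl⟩
        have haA : ∀ j, a j ∈ A ∧ φ (a j) = 0 := fun j => by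
          have := ha j; rw [hFAeq] at this; exact ⟨this.1, this.2⟩
        have hbB : ∀ j, b j ∈ B ∧ ψ (b j) = 0 := fun j => by
          have := hb j; rw [hFBeq] at this; exact ⟨this.1, this.2⟩
        refine ⟨⟨k, a, b, fun j => (haA j).1, fun j => (hbB j).1, rfl⟩, ?_⟩
        show Φ _ = 0
        rw [map_sum]
        refine Finset.sum_eq_zero fun j _ => ?_
        rw [hΦt, (haA j).2, (hbB j).2, zero_mul, mul_zero, add_zero]
      · rintro z ⟨⟨k, a, b, ha, hb, rfl⟩, hz0⟩
        have hz0' : ∑ j, Φ (a j ⊗ₜ[ℝ] b j) = 0 := by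
          rw [← map_sum]; exact hz0
        have hnn : ∀ j ∈ Finset.univ (α := Fin k), 0 ≤ Φ (a j ⊗ₜ[ℝ] b j) := by
          intro j _
          rw [hΦt]
          exact add_nonneg (mul_nonneg (hφ _ (ha j)) (heB _ (hb j)))
            (mul_nonneg (heA _ (ha j)) (hψ _ (hb j)))
        have hterm := (Finset.sum_eq_zero_iff_of_nonneg hnn).1 hz0'
        refine sum_mem_tensorCone _ _ (fun j _ => ?_)
        have ht := hterm j (Finset.mem_univ j)
        rw [hΦt] at ht
        have h1 : φ (a j) * eB (b j) = 0 ∧ eA (a j) * ψ (b j) = 0 := by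
          have p1 := mul_nonneg (hφ _ (ha j)) (heB _ (hb j))
          have p2 := mul_nonneg (heA _ (ha j)) (hψ _ (hb j))
          constructor <;> linarith
        by_cases hbj : b j = 0
        · rw [hbj, TensorProduct.tmul_zero]; exact zero_mem_tensorCone
        by_cases haj : a j = 0
        · rw [haj, TensorProduct.zero_tmul]; exact zero_mem_tensorCone
        have hφa : φ (a j) = 0 := by
          rcases mul_eq_zero.1 h1.1 with h | h
          · exact h
          · exact absurd h (heB' _ (hb j) hbj).ne'
        have hψb : ψ (b j) = 0 := by
          rcases mul_eq_zero.1 h1.2 with h | h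
          · exact absurd h (heA' _ (ha j) haj).ne'
          · exact h
        exact tmul_mem_tensorCone (show a j ∈ FA by rw [hFAeq]; exact ⟨ha j, hφa⟩)
          (show b j ∈ FB by rw [hFBeq]; exact ⟨hb j, hψb⟩)
end
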